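/- Let n, r be natural numbers with r ≥ 1, and let l : Fin r → ℕ with each l_j ≥ 1 and l_1 + ⋯ + l_r = n (so r ≤ n). Let R be a commutative ℚ-algebra, let ħ ∈ R be a unit, and let P ∈ R satisfy P^{n+1} = 0. Set B = ∏_{j=1}^{r} (l_j)! ∈ R (via ℕ → R), define Γ(d) = (∏_{j=1}^{r} ∏_{m=0}^{d·l_j}(l_j·P + m·ħ)) · ((∏_{m=1}^{d}(P + m·ħ))⁻¹)^{n+1} ∈ R, F = Σ_{d≥0} Γ(d)·X^d ∈ R[[X]], E = Σ_{k≥0} ((−B·ħ⁻¹)^k / k!)·X^k ∈ R[[X]] (the exponential series exp(−(B/ħ)X)), and G = E·F. Define the operator 𝔇 : R[[X]] → R[[X]] by 𝔇(f) = P·f + ħ·X·f′ + B·X·f, where f′ is the formal derivative. Then 𝔇^{n+1-r}(G) = (∏_{j=1}^{r} l_j) · X · ((∏_{j=1}^{r} ∏_{m=1}^{l_j-1} (l_j·𝔇 + (m·ħ)·id)) G). -/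

import Mathlib

open Finset PowerSeries


noncomputable def givDiag {R : Type*} [CommRing R] (P hbar : R) :
    Module.End R (PowerSeries R) where
  toFun f := PowerSeries.mk fun d => (P + (d : R) * hbar) * PowerSeries.coeff d f
  map_add' f g := by ext d; simp [mul_add]
  map_smul' c f := by ext d; simp; ring

lemma givDiag_eq {R : Type*} [CommRing R] (P hbar : R) (f : PowerSeries R) :
    PowerSeries.C P * f + PowerSeries.C hbar * (PowerSeries.X * f.derivativeFun)
      = givDiag P hbar f := by
  ext d
  cases d with
  | zero => simp [givDiag]
  | succ e =>
    rw [map_add, PowerSeries.coeff_C_mul, PowerSeries.coeff_C_mul,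
      PowerSeries.coeff_succ_X_mul,
      (show ∀ (g : PowerSeries R) (k : ℕ), PowerSeries.coeff k g.derivativeFun =
        PowerSeries.coeff (k + 1) g * (k + 1) from PowerSeries.coeff_derivative)]
    show _ = PowerSeries.coeff (e+1) (PowerSeries.mk fun d => (P + (d : R) * hbar) * PowerSeries.coeff d f)
    rw [PowerSeries.coeff_mk]
    push_cast
    ring

lemma givExp_deriv {R : Type*} [CommRing R] [Algebra ℚ R] (hbar B : R) (hu : IsUnit hbar)
    (E : PowerSeries R)
    (hE : E = PowerSeries.mk fun k : ℕ =>
      ((Nat.factorial k : ℚ)⁻¹) • (-(B * Ring.inverse hbar)) ^ k) :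
    PowerSeries.C hbar * (PowerSeries.X * E.derivativeFun)
      + PowerSeries.C B * (PowerSeries.X * E) = 0 := by
  have h1 : hbar * Ring.inverse hbar = 1 := Ring.mul_inverse_cancel hbar hu
  set w : R := -(B * Ring.inverse hbar) with hwdef
  have hw : hbar * w = -B := by
    rw [hwdef, mul_neg, ← mul_assoc, mul_comm hbar B, mul_assoc, h1, mul_one]
  subst hE
  ext d
  cases d with
  | zero => simp
  | succ e =>
    rw [map_add, PowerSeries.coeff_C_mul, PowerSeries.coeff_C_mul,
      PowerSeries.coeff_succ_X_mul, PowerSeries.coeff_succ_X_mul,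
      (show ∀ (g : PowerSeries R) (k : ℕ), PowerSeries.coeff k g.derivativeFun =
        PowerSeries.coeff (k + 1) g * (k + 1) from PowerSeries.coeff_derivative),
      PowerSeries.coeff_mk, PowerSeries.coeff_mk]
    have hq : (((e+1).factorial : ℚ)⁻¹) * (((e+1:ℕ)) : ℚ) = ((e.factorial : ℚ)⁻¹) := by
      rw [Nat.factorial_succ]
      push_cast
      rw [mul_inv]
      field_simp
    have hν : ((e : R) + 1) = algebraMap ℚ R (((e+1:ℕ)) : ℚ) := by
      push_cast; simp
    have ha : algebraMap ℚ R (((e+1).factorial : ℚ)⁻¹) * algebraMap ℚ R (((e+1:ℕ)) : ℚ)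
        = algebraMap ℚ R ((e.factorial : ℚ)⁻¹) := by
      rw [← map_mul, hq]
    rw [Algebra.smul_def, Algebra.smul_def]
    simp only [map_zero]
    rw [hν]
    linear_combination (algebraMap ℚ R ((e.factorial : ℚ)⁻¹) * w^e) * hw
      + (hbar * w^(e+1)) * ha


lemma givDiag_coeff {R : Type*} [CommRing R] (P hbar : R) (f : PowerSeries R) (d : ℕ) :
    PowerSeries.coeff d (givDiag P hbar f) = (P + (d : R) * hbar) * PowerSeries.coeff d f := by
  simp [givDiag]

lemma givDiag_pow_coeff {R : Type*} [CommRing R] (P hbar : R) (k : ℕ) (f : PowerSeries R) (d : ℕ) :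
    PowerSeries.coeff d ((givDiag P hbar ^ k) f) = (P + (d : R) * hbar) ^ k * PowerSeries.coeff d f := by
  induction k generalizing f with
  | zero => simp
  | succ k ih =>
    rw [pow_succ, Module.End.mul_apply, ih, givDiag_coeff, pow_succ]
    ring

lemma givDiag_aeval_coeff {R : Type*} [CommRing R] (P hbar : R) (p : Polynomial R)
    (f : PowerSeries R) (d : ℕ) :
    PowerSeries.coeff d ((Polynomial.aeval (givDiag P hbar) p) f)
      = Polynomial.eval (P + (d : R) * hbar) p * PowerSeries.coeff d f := by
  rw [Polynomial.aeval_eq_sum_range, Polynomial.eval_eq_sum_range, LinearMap.sum_apply,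
    map_sum, Finset.sum_mul]
  refine Finset.sum_congr rfl fun i _ => ?_
  rw [LinearMap.smul_apply, map_smul, givDiag_pow_coeff, smul_eq_mul]
  ring

lemma giv_block {R : Type*} [CommRing R] (P hbar : R) (L e : ℕ) (hL : 1 ≤ L) :
    ∏ i ∈ Finset.range L, ((L : R) * P + ((e * L + 1 + i : ℕ) : R) * hbar)
      = (∏ m ∈ Finset.Icc 1 (L - 1), ((L : R) * (P + (e : R) * hbar) + (m : R) * hbar))
        * ((L : R) * (P + ((e + 1 : ℕ) : R) * hbar)) := by
  obtain ⟨K, rfl⟩ : ∃ K, L = K + 1 := ⟨L - 1, (Nat.succ_pred_eq_of_pos hL).symm⟩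
  rw [Finset.prod_range_succ]
  congr 1
  · rw [Nat.add_sub_cancel, ← Finset.Ico_add_one_right_eq_Icc, Finset.prod_Ico_eq_prod_range,
      show K + 1 - 1 = K from rfl]
    apply Finset.prod_congr rfl
    intro i _
    push_cast
    ring
  · push_cast
    ring

/-- Givental's theorem for a complete intersection of multidegree `(l 1, …, l r)` in `ℙⁿ`
with `∑ l j = n`: the series `G = exp(-(B/ħ)X)·F` satisfies the modified Picard–Fuchs
equation with `𝔇 = P + ħ·q·d/dq + B·q`, where `B = l₁!⋯l_r!`. -/
theorem givental_picard_fuchs_degree_n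
    (n r : ℕ) (hr : 1 ≤ r) (l : Fin r → ℕ) (hl : ∀ j, 1 ≤ l j)
    (hsum : ∑ j, l j = n)
    (R : Type*) [CommRing R] [Algebra ℚ R] (hbar : R) (hu : IsUnit hbar)
    (P : R) (hP : P ^ (n + 1) = 0)
    (B : R) (hB : B = ∏ j : Fin r, ((l j).factorial : R))
    (Γ : ℕ → R)
    (hΓ : ∀ d : ℕ, Γ d =
      (∏ j : Fin r, ∏ m ∈ Finset.range (d * l j + 1), ((l j : R) * P + (m : R) * hbar)) *
        (Ring.inverse (∏ m ∈ Finset.Icc 1 d, (P + (m : R) * hbar))) ^ (n + 1))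
    (F : PowerSeries R) (hF : F = PowerSeries.mk Γ)
    (E : PowerSeries R)
    (hE : E = PowerSeries.mk fun k : ℕ => ((Nat.factorial k : ℚ)⁻¹) • (-(B * Ring.inverse hbar)) ^ k)
    (G : PowerSeries R) (hG : G = E * F)
    (𝔇 : Module.End R (PowerSeries R))
    (h𝔇 : ∀ f : PowerSeries R,
      𝔇 f = PowerSeries.C P * f + PowerSeries.C hbar * (PowerSeries.X * f.derivativeFun)
          + PowerSeries.C B * (PowerSeries.X * f)) :
    (𝔇 ^ (n + 1 - r)) G =
      PowerSeries.C (∏ j : Fin r, (l j : R)) * PowerSeries.X *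
        ((Polynomial.aeval 𝔇
            (∏ j : Fin r, ∏ m ∈ Finset.Icc 1 (l j - 1),
              (Polynomial.C (l j : R) * Polynomial.X + Polynomial.C ((m : R) * hbar)))) G) := by
  have hE' := givExp_deriv hbar B hu E hE
  -- conjugation: 𝔇 (E * h) = E * givDiag h
  have hconj : ∀ h : PowerSeries R, 𝔇 (E * h) = E * givDiag P hbar h := by
    intro h
    rw [h𝔇, PowerSeries.derivativeFun_mul, smul_eq_mul, smul_eq_mul]
    linear_combination E * givDiag_eq P hbar h + h * hE'
  have hpow : ∀ (k : ℕ) (h : PowerSeries R),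
      (𝔇 ^ k) (E * h) = E * (givDiag P hbar ^ k) h := by
    intro k
    induction k with
    | zero => intro h; simp
    | succ k ih =>
      intro h
      rw [pow_succ, Module.End.mul_apply, pow_succ, Module.End.mul_apply, hconj, ih]
  have haeval : ∀ (p : Polynomial R) (h : PowerSeries R),
      (Polynomial.aeval 𝔇 p) (E * h) = E * (Polynomial.aeval (givDiag P hbar) p) h := by
    intro p h
    rw [Polynomial.aeval_eq_sum_range, Polynomial.aeval_eq_sum_range,
      LinearMap.sum_apply, LinearMap.sum_apply, Finset.mul_sum]
    refine Finset.sum_congr rfl fun i _ => ?_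
    rw [LinearMap.smul_apply, LinearMap.smul_apply, hpow, mul_smul_comm]
  set Q : Polynomial R := ∏ j : Fin r, ∏ m ∈ Finset.Icc 1 (l j - 1),
      (Polynomial.C (l j : R) * Polynomial.X + Polynomial.C ((m : R) * hbar)) with hQ
  rw [hG, hpow, haeval]
  have hrn : r ≤ n := by
    calc r = ∑ _j : Fin r, 1 := by simp
    _ ≤ ∑ j, l j := Finset.sum_le_sum fun j _ => hl j
    _ = n := hsum
  -- reduce to the F-identity
  have key : (givDiag P hbar ^ (n + 1 - r)) F =
      PowerSeries.C (∏ j : Fin r, (l j : R)) * PowerSeries.X *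
        ((Polynomial.aeval (givDiag P hbar) Q) F) := by

    ext d
    cases d with
    | zero =>
      rw [givDiag_pow_coeff, hF, PowerSeries.coeff_mk, mul_assoc, PowerSeries.coeff_C_mul,
        PowerSeries.coeff_zero_X_mul, mul_zero]
      have h0 : Γ 0 = (∏ j : Fin r, (l j : R)) * P ^ r := by
        rw [hΓ]
        simp only [Nat.zero_mul, zero_mul, Finset.prod_range_one, Nat.cast_zero, add_zero,
          show Finset.Icc 1 0 = (∅ : Finset ℕ) by simp, Finset.prod_empty, Ring.inverse_one,
          one_pow, mul_one]
        simp only [zero_add, Finset.prod_range_one, Nat.cast_zero, zero_mul, add_zero]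
        rw [Finset.prod_mul_distrib, Finset.prod_const, Finset.card_univ, Fintype.card_fin]
      rw [h0, Nat.cast_zero, zero_mul, add_zero]
      calc P ^ (n + 1 - r) * ((∏ j : Fin r, (l j : R)) * P ^ r)
          = (∏ j : Fin r, (l j : R)) * P ^ (n + 1 - r + r) := by rw [pow_add]; ring
        _ = 0 := by rw [Nat.sub_add_cancel (by omega : r ≤ n + 1), hP, mul_zero]
    | succ e =>
      rw [givDiag_pow_coeff, mul_assoc, PowerSeries.coeff_C_mul, PowerSeries.coeff_succ_X_mul,
        givDiag_aeval_coeff, hF, PowerSeries.coeff_mk, PowerSeries.coeff_mk]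
      set u : R := P + ((e + 1 : ℕ) : R) * hbar with hudef
      have hPnil : IsNilpotent P := ⟨n + 1, hP⟩
      have hcast : IsUnit ((e + 1 : ℕ) : R) := by
        have h5 : ((e + 1 : ℕ) : R) = algebraMap ℚ R ((e + 1 : ℕ) : ℚ) := by simp
        rw [h5]
        exact (isUnit_iff_ne_zero.2 (by positivity : ((e + 1 : ℕ) : ℚ) ≠ 0)).map _
      have huu : IsUnit u :=
        hPnil.isUnit_add_right_of_commute (hcast.mul hu) (Commute.all _ _)
      have hQeval : Polynomial.eval (P + (e : R) * hbar) Q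
          = ∏ j : Fin r, ∏ m ∈ Finset.Icc 1 (l j - 1),
              ((l j : R) * (P + (e : R) * hbar) + (m : R) * hbar) := by
        simp [hQ, Polynomial.eval_prod]
      have hNumj : ∀ j : Fin r,
          ∏ m ∈ Finset.range ((e + 1) * l j + 1), ((l j : R) * P + (m : R) * hbar)
            = (∏ m ∈ Finset.range (e * l j + 1), ((l j : R) * P + (m : R) * hbar))
              * ((∏ m ∈ Finset.Icc 1 (l j - 1),
                  ((l j : R) * (P + (e : R) * hbar) + (m : R) * hbar)) * ((l j : R) * u)) := by
        intro j
        rw [show (e + 1) * l j + 1 = (e * l j + 1) + l j by ring, Finset.prod_range_add,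
          giv_block P hbar (l j) e (hl j), hudef]
      have hN : ∏ j : Fin r, ∏ m ∈ Finset.range ((e + 1) * l j + 1),
            ((l j : R) * P + (m : R) * hbar)
          = (∏ j : Fin r, ∏ m ∈ Finset.range (e * l j + 1), ((l j : R) * P + (m : R) * hbar))
            * ((∏ j : Fin r, ∏ m ∈ Finset.Icc 1 (l j - 1),
                ((l j : R) * (P + (e : R) * hbar) + (m : R) * hbar))
              * ((∏ j : Fin r, (l j : R)) * u ^ r)) := by
        rw [Finset.prod_congr rfl fun j _ => hNumj j, Finset.prod_mul_distrib,
          Finset.prod_mul_distrib, Finset.prod_mul_distrib, Finset.prod_const,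
          Finset.card_univ, Fintype.card_fin]
      have hDen : ∏ m ∈ Finset.Icc 1 (e + 1), (P + (m : R) * hbar)
          = (∏ m ∈ Finset.Icc 1 e, (P + (m : R) * hbar)) * u :=
        Finset.prod_Icc_succ_top (by omega) _
      rw [hΓ (e + 1), hΓ e, hN, hDen, Ring.mul_inverse_rev, mul_pow, hQeval]
      set Ne : R := ∏ j : Fin r, ∏ m ∈ Finset.range (e * l j + 1),
        ((l j : R) * P + (m : R) * hbar) with hNe
      set Bl : R := ∏ j : Fin r, ∏ m ∈ Finset.Icc 1 (l j - 1),
        ((l j : R) * (P + (e : R) * hbar) + (m : R) * hbar) with hBl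
      set Lp : R := ∏ j : Fin r, (l j : R) with hLp
      set Qi : R := Ring.inverse (∏ m ∈ Finset.Icc 1 e, (P + (m : R) * hbar)) with hQi
      have h1 : u ^ (n + 1 - r) * u ^ r = u ^ (n + 1) := by
        rw [← pow_add, Nat.sub_add_cancel (by omega : r ≤ n + 1)]
      have h2 : u ^ (n + 1) * (Ring.inverse u) ^ (n + 1) = 1 := by
        rw [← mul_pow, Ring.mul_inverse_cancel u huu, one_pow]
      linear_combination (Ne * Bl * Lp * Qi ^ (n + 1) * (Ring.inverse u) ^ (n + 1)) * h1
        + (Ne * Bl * Lp * Qi ^ (n + 1)) * h2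
  rw [key]; ring
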